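/- arXiv:1507.07038 — 2 statements merged into one kernel-verified Lean document; each statement's English description precedes it below -/
import Mathlib

section
/- For any nonempty strings u and v over Σ: u ≺ uv and u ≺ vu in V-order (every nonempty proper prefix and every nonempty proper suffix of a string precedes that string in V-order). -/
variable {α : Type*} [LinearOrder α]

/-- The star operation on strings: delete the letter `x_h`, where `h` is the
start of the longest non-decreasing suffix (so `h = 1` iff the whole string is
non-decreasing, and otherwise `x_{h-1} > x_h ≤ x_{h+1} ≤ ⋯ ≤ x_n`). -/
def vstar : List α → List α
  | [] => []
  | a :: t => if List.IsChain (· ≤ ·) (a :: t) then t else a :: vstar t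

/-- V-order `≺` between distinct strings `x`, `y`: either `x` lies on the path
`y, y*, y^{2*}, …, ε`, or (if neither lies on the path of the other) taking the
least `s, t` with `x^{(s+1)*} = y^{(t+1)*}` and the greatest position `j` at
which `s = x^{s*}` and `t = y^{t*}` differ, the letter of `x^{s*}` at `j` is
smaller than that of `y^{t*}`. -/
def VLess (x y : List α) : Prop :=
  (∃ k : ℕ, 0 < k ∧ vstar^[k] y = x) ∨
  ((¬ ∃ k : ℕ, vstar^[k] y = x) ∧ (¬ ∃ k : ℕ, vstar^[k] x = y) ∧
    ∃ s t : ℕ,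
      vstar^[s + 1] x = vstar^[t + 1] y ∧
      (∀ s' t' : ℕ, vstar^[s' + 1] x = vstar^[t' + 1] y → s ≤ s' ∧ t ≤ t') ∧
      ∃ j : ℕ, j < (vstar^[s] x).length ∧
        (∀ j' : ℕ, j < j' → (vstar^[s] x)[j']? = (vstar^[t] y)[j']?) ∧
        ∃ a b : α, (vstar^[s] x)[j]? = some a ∧ (vstar^[t] y)[j]? = some b ∧
          a < b)

/-- canonical deletion position of `vstar` -/
def vdel : List α → ℕ
  | [] => 0
  | a :: t => if List.IsChain (· ≤ ·) (a :: t) then 0 else vdel t + 1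

@[simp] lemma vstar_nil : vstar ([] : List α) = [] := rfl

lemma vstar_cons (a : α) (t : List α) :
    vstar (a :: t) = if List.IsChain (· ≤ ·) (a :: t) then t else a :: vstar t := rfl

lemma vdel_cons (a : α) (t : List α) :
    vdel (a :: t) = if List.IsChain (· ≤ ·) (a :: t) then 0 else vdel t + 1 := rfl

lemma length_vstar (z : List α) : (vstar z).length = z.length - 1 := by
  induction z with
  | nil => simp
  | cons a t ih =>
    rw [vstar_cons]
    split
    · simp
    · rcases t with - | ⟨b, t⟩
      · simp_all [List.isChain_singleton]
      · simpa using ih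

lemma length_vstar_iter (z : List α) (k : ℕ) : (vstar^[k] z).length = z.length - k := by
  induction k with
  | zero => simp
  | succ k ih =>
    rw [Function.iterate_succ_apply', length_vstar, ih]
    omega

lemma vstar_iter_nil (k : ℕ) : vstar^[k] ([] : List α) = [] := by
  induction k with
  | zero => rfl
  | succ k ih => rw [Function.iterate_succ_apply', ih]; rfl

/-- d3 -/
lemma vstar_eq_eraseIdx (z : List α) : vstar z = z.eraseIdx (vdel z) := by
  induction z with
  | nil => rfl
  | cons a t ih =>
    rw [vstar_cons, vdel_cons]
    split
    · simp
    · simp [List.eraseIdx_cons_succ, ih]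

/-- d4 -/
lemma vdel_lt_length {z : List α} (h : z ≠ []) : vdel z < z.length := by
  induction z with
  | nil => simp at h
  | cons a t ih =>
    rw [vdel_cons]
    split
    · simp
    · rcases t with - | ⟨b, t⟩
      · simp_all [List.isChain_singleton]
      · have := ih (by simp)
        simpa using this

/-- d1 -/
lemma chain'_drop_vdel (z : List α) : List.IsChain (· ≤ ·) (z.drop (vdel z)) := by
  induction z with
  | nil => simp
  | cons a t ih =>
    rw [vdel_cons]
    split
    · simpa
    · simpa using ih

/-- vdel z = 0 iff chain (for nonempty; and trivially for nil) -/
lemma chain'_of_vdel_eq_zero {z : List α} (h : vdel z = 0) : List.IsChain (· ≤ ·) z := by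
  have := chain'_drop_vdel z
  rwa [h, List.drop_zero] at this

/-- d2: minimality -/
lemma vdel_le_of_chain' {z : List α} {n : ℕ} (h : List.IsChain (· ≤ ·) (z.drop n)) :
    vdel z ≤ n := by
  induction z generalizing n with
  | nil => simp [vdel]
  | cons a t ih =>
    rw [vdel_cons]
    split
    · omega
    · rcases n with - | n
      · simp_all
      · simpa using Nat.succ_le_succ (ih (by simpa using h))

/-- d5: descent just before the deletion position (getElem? form) -/
lemma descent_at_vdel {z : List α} (h : 0 < vdel z) :
    ∃ p q, z[vdel z]? = some p ∧ z[vdel z - 1]? = some q ∧ p < q := by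
  induction z with
  | nil => simp [vdel] at h
  | cons a t ih =>
    rw [vdel_cons] at h ⊢
    split at h
    · omega
    · rename_i hnc
      rw [if_neg hnc]
      rcases Nat.eq_zero_or_pos (vdel t) with ht0 | hpos
      · have htc : List.IsChain (· ≤ ·) t := chain'_of_vdel_eq_zero ht0
        have htne : t ≠ [] := by
          rintro rfl; exact hnc (List.isChain_singleton a)
        rcases t with - | ⟨b, t⟩
        · simp at htne
        · have hba : b < a := by
            by_contra hab
            exact hnc (List.isChain_cons.mpr ⟨by simpa using le_of_not_gt hab, htc⟩)
          refine ⟨b, a, ?_, ?_, hba⟩ <;> simp [ht0]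
      · rcases ih hpos with ⟨p, q, hp, hq, hpq⟩
        refine ⟨p, q, ?_, ?_, hpq⟩
        · simpa using hp
        · rcases Nat.exists_eq_succ_of_ne_zero (by omega : vdel t ≠ 0) with ⟨m, hm⟩
          simp only [hm, Nat.add_sub_cancel]
          simpa [hm] using hq

/-- F1: monotonicity of vdel along the star path -/
lemma vdel_vstar_le (z : List α) : vdel (vstar z) ≤ vdel z := by
  apply vdel_le_of_chain'
  rw [vstar_eq_eraseIdx]
  rcases Nat.lt_or_ge (vdel z) z.length with h | h
  · have : (z.eraseIdx (vdel z)).drop (vdel z) = z.drop (vdel z + 1) := by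
      rw [List.eraseIdx_eq_take_drop_succ]
      rw [List.drop_append]
      simp [List.length_take, Nat.min_eq_left (Nat.le_of_lt h)]
    rw [this, ← List.tail_drop]
    exact (chain'_drop_vdel z).tail
  · rw [List.eraseIdx_of_length_le h]
    exact chain'_drop_vdel z

/-- SPLIT: how vstar acts on a concatenation -/
lemma vstar_append (x y : List α) (hx : x ≠ []) :
    (vdel (x ++ y) = vdel x ∧ vdel x < x.length ∧ vstar (x ++ y) = vstar x ++ y) ∨
    (vdel (x ++ y) = x.length + vdel y ∧ y ≠ [] ∧ vstar (x ++ y) = x ++ vstar y) := by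
  induction x with
  | nil => simp at hx
  | cons a x' ih =>
    have hcons : (a :: x') ++ y = a :: (x' ++ y) := rfl
    by_cases hx'0 : x' = []
    · subst hx'0
      by_cases hc : List.IsChain (· ≤ ·) (a :: y)
      · left
        refine ⟨?_, ?_, ?_⟩
        · rw [hcons, vdel_cons, if_pos (by simpa using hc), vdel_cons,
            if_pos (List.isChain_singleton a)]
        · rw [vdel_cons, if_pos (List.isChain_singleton a)]; simp
        · rw [hcons, vstar_cons, if_pos (by simpa using hc), vstar_cons,
            if_pos (List.isChain_singleton a)]
      · right
        have hy : y ≠ [] := by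
          rintro rfl; exact hc (List.isChain_singleton a)
        refine ⟨?_, hy, ?_⟩
        · rw [hcons, vdel_cons, if_neg (by simpa using hc)]
          simp; omega
        · rw [hcons, vstar_cons, if_neg (by simpa using hc)]
          simp
    · by_cases hc : List.IsChain (· ≤ ·) (a :: (x' ++ y))
      · left
        have hcx : List.IsChain (· ≤ ·) (a :: x') :=
          hc.prefix (by simpa using (List.prefix_append x' y).cons a)
        refine ⟨?_, ?_, ?_⟩
        · rw [hcons, vdel_cons, if_pos hc, vdel_cons, if_pos hcx]
        · rw [vdel_cons, if_pos hcx]; simp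
        · rw [hcons, vstar_cons, if_pos hc, vstar_cons, if_pos hcx]
      · have hstep : vstar ((a :: x') ++ y) = a :: vstar (x' ++ y) := by
          rw [hcons, vstar_cons, if_neg hc]
        have hdstep : vdel ((a :: x') ++ y) = vdel (x' ++ y) + 1 := by
          rw [hcons, vdel_cons, if_neg hc]
        rcases ih hx'0 with ⟨h1, h2, h3⟩ | ⟨h1, h2, h3⟩
        · left
          have hncx : ¬ List.IsChain (· ≤ ·) (a :: x') := by
            intro hcx
            apply hc
            have hx'c : List.IsChain (· ≤ ·) x' := hcx.tail
            have hvd0 : vdel x' = 0 := by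
              rcases x' with - | ⟨c, t⟩
              · rfl
              · rw [vdel_cons, if_pos hx'c]
            have hchy : List.IsChain (· ≤ ·) (x' ++ y) :=
              chain'_of_vdel_eq_zero (by rw [h1, hvd0])
            refine List.isChain_cons.mpr ⟨?_, hchy⟩
            intro h hh
            rcases x' with - | ⟨c, t⟩
            · simp at hx'0
            · simp at hh
              subst hh
              exact (List.isChain_cons_cons.mp hcx).1
          refine ⟨?_, ?_, ?_⟩
          · rw [hdstep, h1, vdel_cons, if_neg hncx]
          · rw [vdel_cons, if_neg hncx]
            simpa using h2
          · rw [hstep, h3, vstar_cons, if_neg hncx]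
            simp
        · right
          refine ⟨?_, h2, ?_⟩
          · rw [hdstep, h1]
            simp; omega
          · rw [hstep, h3]
            simp

/-- TAIL: if vstar z = z.tail then z is a chain -/
lemma chain'_of_vstar_eq_tail {z : List α} (h : vstar z = z.tail) :
    List.IsChain (· ≤ ·) z := by
  induction z with
  | nil => simp
  | cons a t ih =>
    by_cases hc : List.IsChain (· ≤ ·) (a :: t)
    · exact hc
    · exfalso
      rw [vstar_cons, if_neg hc] at h
      simp only [List.tail_cons] at h
      -- t = a :: vstar t
      have ht : t = a :: vstar t := h.symm
      have htt : vstar t = t.tail := by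
        conv_rhs => rw [ht]
        rfl
      have hct : List.IsChain (· ≤ ·) t := ih htt
      apply hc
      refine List.isChain_cons.mpr ⟨?_, hct⟩
      intro c hc'
      have : t.head? = some a := by rw [ht]; simp
      rw [this] at hc'
      simp at hc'
      subst hc'
      exact le_refl a

lemma getLast?_cons_of_ne {a : α} {t : List α} (h : t ≠ []) :
    (a :: t).getLast? = t.getLast? := by
  rcases t with - | ⟨b, t⟩
  · simp at h
  · exact List.getLast?_cons_cons ..

/-- LASTMONO: last letter never decreases under vstar -/
lemma last_vstar_mono {z : List α} (h : vstar z ≠ []) :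
    ∀ b ∈ z.getLast?, ∀ a ∈ (vstar z).getLast?, b ≤ a := by
  induction z with
  | nil => simp at h
  | cons c t ih =>
    by_cases hc : List.IsChain (· ≤ ·) (c :: t)
    · rw [vstar_cons, if_pos hc] at h ⊢
      intro b hb a ha
      rw [getLast?_cons_of_ne h] at hb
      rw [hb] at ha; simp at ha; subst ha; exact le_refl _
    · rw [vstar_cons, if_neg hc] at h ⊢
      by_cases hvt : vstar t = []
      · -- t is short: t must be nonempty (else chain) and vstar t = [] means |t| = 1
        have htne : t ≠ [] := by rintro rfl; exact hc (List.isChain_singleton c)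
        have hlen : t.length = 1 := by
          have := length_vstar t
          rw [hvt] at this
          simp at this
          have : t.length ≤ 1 := by omega
          have h2 : 1 ≤ t.length := List.length_pos_iff.mpr htne
          omega
        rcases t with - | ⟨d, t'⟩
        · simp at htne
        · have ht' : t' = [] := by simpa using hlen
          subst ht'
          have hdc : d < c := by
            by_contra hx
            exact hc (List.isChain_pair.mpr (le_of_not_gt hx))
          intro b hb a ha
          simp [hvt] at hb ha
          subst hb; subst ha
          exact le_of_lt hdc
      · intro b hb a ha
        rw [getLast?_cons_of_ne hvt] at ha
        have htne : t ≠ [] := by rintro rfl; simp at hvt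
        rw [getLast?_cons_of_ne htne] at hb
        exact ih hvt b hb a ha

/-- CHAINDROP: for a chain, iterating vstar is just dropping -/
lemma vstar_iter_of_chain' {z : List α} (h : List.IsChain (· ≤ ·) z) (k : ℕ) :
    vstar^[k] z = z.drop k := by
  induction k generalizing z with
  | zero => simp
  | succ k ih =>
    rw [Function.iterate_succ_apply]
    have h1 : vstar z = z.tail := by
      rcases z with - | ⟨a, t⟩
      · rfl
      · rw [vstar_cons, if_pos h]; rfl
    rw [h1, ih h.tail]
    rcases z with - | ⟨a, t⟩
    · simp
    · rfl

/-- iterated LASTMONO down to a singleton -/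
lemma last_le_vstar_iter {z : List α} (k : ℕ) (h : vstar^[k] z ≠ []) :
    ∀ b ∈ z.getLast?, ∀ a ∈ (vstar^[k] z).getLast?, b ≤ a := by
  induction k with
  | zero =>
    intro b hb a ha
    simp only [Function.iterate_zero_apply] at ha
    rw [hb] at ha
    simp at ha
    exact le_of_eq ha
  | succ k ih =>
    rw [Function.iterate_succ_apply'] at h ⊢
    have hne : vstar^[k] z ≠ [] := by
      rintro he; rw [he] at h; simp at h
    intro b hb a ha
    have hmid : (vstar^[k] z).getLast?.isSome := by
      rwa [List.getLast?_isSome]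
    rcases Option.isSome_iff_exists.mp hmid with ⟨m, hm⟩
    exact le_trans (ih hne b hb m hm) (last_vstar_mono h m hm a ha)

/-! ## helpers -/

lemma vstar_iter_eq_nil_of_le {z : List α} {k : ℕ} (h : z.length ≤ k) :
    vstar^[k] z = [] :=
  List.length_eq_zero_iff.mp (by rw [length_vstar_iter]; omega)

lemma vdel_iter_le (z : List α) (k : ℕ) : vdel (vstar^[k] z) ≤ vdel z := by
  induction k with
  | zero => simp
  | succ k ih =>
    rw [Function.iterate_succ_apply']
    exact le_trans (vdel_vstar_le _) ih

lemma vdel_iter_anti (z : List α) {k m : ℕ} (h : k ≤ m) :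
    vdel (vstar^[m] z) ≤ vdel (vstar^[k] z) := by
  obtain ⟨d, rfl⟩ := Nat.exists_eq_add_of_le h
  rw [add_comm, Function.iterate_add_apply]
  exact vdel_iter_le _ _

lemma chain'_le_getElem {z : List α} (h : List.IsChain (· ≤ ·) z) {i j : ℕ}
    (hij : i ≤ j) (hj : j < z.length) :
    z[i]'(lt_of_le_of_lt hij hj) ≤ z[j]'hj := by
  rcases Nat.eq_or_lt_of_le hij with rfl | hlt
  · exact le_refl _
  · exact (List.pairwise_iff_getElem.mp (List.isChain_iff_pairwise.mp h)) i j _ hj hlt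

/-- reconstruction: equal erasures + equal letter at the erased spot ⟹ equal -/
lemma eq_of_eraseIdx_eq {u b : List α} {n : ℕ}
    (he : u.eraseIdx n = b.eraseIdx n) (hg : u[n]? = b[n]?)
    (hn : n < u.length) : u = b := by
  apply List.ext_getElem?
  intro j
  rcases lt_trichotomy j n with hj | rfl | hj
  · have h1 := List.getElem?_eraseIdx (l := u) (i := n) (j := j)
    have h2 := List.getElem?_eraseIdx (l := b) (i := n) (j := j)
    rw [if_pos hj] at h1 h2
    rw [← h1, ← h2, he]
  · exact hg
  · have h1 := List.getElem?_eraseIdx (l := u) (i := n) (j := (j - 1))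
    have h2 := List.getElem?_eraseIdx (l := b) (i := n) (j := (j - 1))
    rw [if_neg (by omega)] at h1 h2
    have hj1 : j - 1 + 1 = j := by omega
    rw [hj1] at h1 h2
    rw [← h1, ← h2, he]

/-- CMP core: comparison of `u` with a sibling `b` having the same vstar. -/
lemma crux_core {u b : List α} (hu : u ≠ []) {i' : ℕ} (hi'le : i' ≤ vdel u)
    (hbe : b.eraseIdx i' = vstar u)
    (htie : i' = vdel u → ∃ p q, u[vdel u]? = some p ∧ b[vdel u]? = some q ∧ p < q) :
    ∃ j : ℕ, j < u.length ∧ (∀ j' : ℕ, j < j' → u[j']? = b[j']?) ∧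
      ∃ p q, u[j]? = some p ∧ b[j]? = some q ∧ p < q := by
  set i := vdel u with hidef
  have hi : i < u.length := vdel_lt_length hu
  have hue : u.eraseIdx i = vstar u := (vstar_eq_eraseIdx u).symm
  have hhigh : ∀ j' : ℕ, i < j' → u[j']? = b[j']? := by
    intro j' hj'
    have h1 := List.getElem?_eraseIdx (l := u) (i := i) (j := (j' - 1))
    have h2 := List.getElem?_eraseIdx (l := b) (i := i') (j := (j' - 1))
    rw [if_neg (by omega)] at h1
    rw [if_neg (by omega)] at h2
    have hj1 : j' - 1 + 1 = j' := by omega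
    rw [hj1] at h1 h2
    rw [← h1, ← h2, hue, hbe]
  refine ⟨i, hi, hhigh, ?_⟩
  rcases Nat.eq_or_lt_of_le hi'le with heq | hlt
  · exact htie heq
  · -- i' < i : b[i] = u[i-1] > u[i]
    have h2 := List.getElem?_eraseIdx (l := b) (i := i') (j := (i - 1))
    rw [if_neg (by omega)] at h2
    have hi1 : i - 1 + 1 = i := by omega
    rw [hi1, hbe, ← hue] at h2
    have h1 := List.getElem?_eraseIdx (l := u) (i := i) (j := (i - 1))
    rw [if_pos (by omega)] at h1
    rcases descent_at_vdel (z := u) (show 0 < vdel u by omega) with ⟨p, q, hp, hq, hpq⟩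
    rw [← hidef] at hp hq
    exact ⟨p, q, hp, by rw [← h2, h1]; exact hq, hpq⟩

/-! ## the second disjunct of VLess, as a standalone predicate -/

def VData (x y : List α) : Prop :=
  (¬ ∃ k : ℕ, vstar^[k] y = x) ∧ (¬ ∃ k : ℕ, vstar^[k] x = y) ∧
    ∃ s t : ℕ,
      vstar^[s + 1] x = vstar^[t + 1] y ∧
      (∀ s' t' : ℕ, vstar^[s' + 1] x = vstar^[t' + 1] y → s ≤ s' ∧ t ≤ t') ∧
      ∃ j : ℕ, j < (vstar^[s] x).length ∧
        (∀ j' : ℕ, j < j' → (vstar^[s] x)[j']? = (vstar^[t] y)[j']?) ∧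
        ∃ a b : α, (vstar^[s] x)[j]? = some a ∧ (vstar^[t] y)[j]? = some b ∧
          a < b

/-- T1: transport along a step on the `y` side -/
lemma vdata_step_y {x y y' : List α} (hx : x ≠ []) (hyy : vstar y = y')
    (hlt : x.length < y.length) (hle : x.length ≤ y'.length)
    (h : VData x y') : VData x y := by
  obtain ⟨h1, h2, s, t, hpair, hmin, j, hj, hhigh, a, b, ha, hb, hab⟩ := h
  have hiter : ∀ k : ℕ, vstar^[k + 1] y = vstar^[k] y' := by
    intro k; rw [Function.iterate_succ_apply, hyy]
  refine ⟨?_, ?_, s, t + 1, ?_, ?_, j, hj, ?_, a, b, ha, ?_, hab⟩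
  · rintro ⟨k, hk⟩
    rcases k with - | k
    · simp only [Function.iterate_zero_apply] at hk
      subst hk; omega
    · exact h1 ⟨k, by rwa [hiter] at hk⟩
  · rintro ⟨k, hk⟩
    have := congrArg List.length hk
    rw [length_vstar_iter] at this
    omega
  · rw [hiter (t + 1), hpair]
  · intro s' t' hp
    rcases t' with - | t'
    · exfalso
      rw [show (0:ℕ) + 1 = 1 from rfl] at hp
      have := congrArg List.length hp
      rw [length_vstar_iter, Function.iterate_one, hyy] at this
      have hx1 : 0 < x.length := List.length_pos_iff.mpr hx
      omega
    · rw [hiter (t' + 1)] at hp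
      have := hmin s' t' hp
      omega
  · intro j' hj'
    rw [hiter t]
    exact hhigh j' hj'
  · rw [hiter t]
    exact hb

/-- T2: transport along simultaneous steps on both sides -/
lemma vdata_step_xy {x y x' y' : List α} (hx : x ≠ []) (hy : y ≠ [])
    (hxx : vstar x = x') (hyy : vstar y = y')
    (hlt : x.length < y.length) (h : VData x' y') : VData x y := by
  obtain ⟨h1, h2, s, t, hpair, hmin, j, hj, hhigh, a, b, ha, hb, hab⟩ := h
  have hiterx : ∀ k : ℕ, vstar^[k + 1] x = vstar^[k] x' := by
    intro k; rw [Function.iterate_succ_apply, hxx]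
  have hitery : ∀ k : ℕ, vstar^[k + 1] y = vstar^[k] y' := by
    intro k; rw [Function.iterate_succ_apply, hyy]
  have hx1 : 0 < x.length := List.length_pos_iff.mpr hx
  have hy1 : 0 < y.length := List.length_pos_iff.mpr hy
  refine ⟨?_, ?_, s + 1, t + 1, ?_, ?_, j, ?_, ?_, a, b, ?_, ?_, hab⟩
  · rintro ⟨k, hk⟩
    rcases k with - | k
    · simp only [Function.iterate_zero_apply] at hk
      subst hk; omega
    · -- vstar^[k] y' = x ; apply vstar to get vstar^[k+1] y' = x'
      apply h1
      refine ⟨k + 1, ?_⟩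
      rw [Function.iterate_succ_apply', ← hxx]
      rw [hitery] at hk
      rw [hk]
  · rintro ⟨k, hk⟩
    have := congrArg List.length hk
    rw [length_vstar_iter] at this
    omega
  · rw [hiterx (s + 1), hitery (t + 1), hpair]
  · intro s' t' hp
    rcases s' with - | s'
    · exfalso
      rw [show (0:ℕ) + 1 = 1 from rfl, Function.iterate_one, hxx, hitery] at hp
      exact h1 ⟨t', hp.symm⟩
    · rcases t' with - | t'
      · exfalso
        rw [show (0:ℕ) + 1 = 1 from rfl, Function.iterate_one, hyy, hiterx] at hp
        have := congrArg List.length hp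
        rw [length_vstar_iter, ← hxx, ← hyy, length_vstar, length_vstar] at this
        omega
      · rw [hiterx (s' + 1), hitery (t' + 1)] at hp
        have := hmin s' t' hp
        omega
  · rw [hiterx s]; exact hj
  · intro j' hj'
    rw [hiterx s, hitery t]
    exact hhigh j' hj'
  · rw [hiterx s]; exact ha
  · rw [hitery t]; exact hb

/-- boundary fact: if the first deletion of `v ++ u` is in the `u`-part and `u` is a
chain, then `u`'s head is strictly below `v`'s last letter -/
lemma boundary_of_udel {v u : List α} (hv : v ≠ []) (hu : u ≠ [])
    (hd : vdel (v ++ u) = v.length + vdel u) (hcu : List.IsChain (· ≤ ·) u) :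
    ∀ g ∈ v.getLast?, ∀ a ∈ u.head?, a < g := by
  intro g hg a ha
  by_contra hle
  have hvl : 0 < v.length := List.length_pos_iff.mpr hv
  have hvg : v[v.length - 1]'(by omega) = g := by
    have h2 : v[v.length - 1]? = some (v[v.length - 1]'(by omega)) :=
      List.getElem?_eq_getElem (by omega)
    have h3 := List.getLast?_eq_getElem? (l := v)
    rw [hg, h2] at h3
    exact (Option.some.inj h3).symm
  have hdrop : (v ++ u).drop (v.length - 1) = g :: u := by
    rw [List.drop_append_of_le_length (by omega)]
    have hvd : v.drop (v.length - 1) = [g] := by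
      rw [List.drop_eq_getElem_cons (by omega : v.length - 1 < v.length)]
      rw [show v.length - 1 + 1 = v.length by omega, List.drop_length, hvg]
    rw [hvd]
    rfl
  have hchain : List.IsChain (· ≤ ·) ((v ++ u).drop (v.length - 1)) := by
    rw [hdrop]
    refine List.isChain_cons.mpr ⟨?_, hcu⟩
    intro y hy
    rw [ha] at hy
    simp at hy
    subst hy
    exact le_of_not_gt hle
  have := vdel_le_of_chain' hchain
  omega

def Clean (u v : List α) : Prop :=
  ∀ k ≤ v.length, vstar^[k] (v ++ u) = vstar^[k] v ++ u

theorem main_induction : ∀ n : ℕ, ∀ u v : List α, u ≠ [] → v ≠ [] →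
    u.length + v.length = n →
    (vstar^[v.length] (u ++ v) = u ∨ VData u (u ++ v)) ∧
    ((vstar^[v.length] (v ++ u) = u ∧ Clean u v) ∨ VData u (v ++ u)) := by
  intro n
  induction n using Nat.strong_induction_on with
  | _ n ih =>
  intro u v hu hv hn
  have hul : 0 < u.length := List.length_pos_iff.mpr hu
  have hvl : 0 < v.length := List.length_pos_iff.mpr hv
  constructor
  · ----------------------------------------------------------------
    -- PREFIX:  u  vs  u ++ v
    ----------------------------------------------------------------
    have hwlen : (u ++ v).length = u.length + v.length := by simp
    rcases vstar_append u v hu with ⟨hd, hdlt, hw1⟩ | ⟨hd, -, hw1⟩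
    · -- first deletion inside u
      by_cases hb : vstar^[v.length] (u ++ v) = u
      · exact Or.inl hb
      right
      have hclause1 : ¬ ∃ k : ℕ, vstar^[k] (u ++ v) = u := by
        rintro ⟨k, hk⟩
        have := congrArg List.length hk
        rw [length_vstar_iter, hwlen] at this
        have hkv : k = v.length := by omega
        exact hb (hkv ▸ hk)
      have hclause2 : ¬ ∃ k : ℕ, vstar^[k] u = u ++ v := by
        rintro ⟨k, hk⟩
        have := congrArg List.length hk
        rw [length_vstar_iter, hwlen] at this
        omega
      by_cases hu1 : vstar u = []
      · -- |u| = 1 base case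
        have hulen : u.length = 1 := by
          have := length_vstar u
          rw [hu1] at this
          simp at this
          omega
        obtain ⟨p, hp⟩ := List.length_eq_one_iff.mp hulen
        have hvd0 : vdel u = 0 := by
          rw [hp, vdel_cons, if_pos (List.isChain_singleton p)]
        have hchain : List.IsChain (· ≤ ·) (u ++ v) :=
          chain'_of_vdel_eq_zero (by rw [hd, hvd0])
        have hbd : vstar^[v.length] (u ++ v) = (u ++ v).drop v.length :=
          vstar_iter_of_chain' hchain v.length
        have hqlen : ((u ++ v).drop v.length).length = 1 := by
          simp; omega
        obtain ⟨q, hq⟩ := List.length_eq_one_iff.mp hqlen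
        have hqe : (u ++ v)[v.length]? = some q := by
          have h0 : ((u ++ v).drop v.length)[0]? = some q := by rw [hq]; rfl
          rw [List.getElem?_drop] at h0
          simpa using h0
        have hpe : (u ++ v)[0]? = some p := by
          rw [hp]
          simp
        have hple : p ≤ q := by
          have hq' : (u ++ v)[v.length]'(by omega) = q := by
            rw [List.getElem?_eq_getElem (by omega : v.length < (u ++ v).length)]
              at hqe
            exact Option.some.inj hqe
          have hp' : (u ++ v)[0]'(by omega) = p := by
            rw [List.getElem?_eq_getElem (by omega : 0 < (u ++ v).length)] at hpe
            exact Option.some.inj hpe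
          rw [← hp', ← hq']
          exact chain'_le_getElem hchain (Nat.zero_le _) _
        have hpne : p ≠ q := by
          intro he
          apply hb
          rw [hbd, hq, ← he, ← hp]
        refine ⟨hclause1, hclause2, 0, v.length, ?_, ?_, 0, ?_, ?_, p, q, ?_, ?_, ?_⟩
        · rw [show (0:ℕ) + 1 = 1 from rfl, Function.iterate_one, hu1]
          exact (vstar_iter_eq_nil_of_le (by rw [hwlen]; omega)).symm
        · intro s' t' hpair
          refine ⟨Nat.zero_le _, ?_⟩
          have := congrArg List.length hpair
          rw [length_vstar_iter, length_vstar_iter, hwlen] at this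
          omega
        · simp only [Function.iterate_zero_apply]; omega
        · intro j' hj'
          rw [Function.iterate_zero_apply, hbd, hq, hp]
          rw [List.getElem?_eq_none (by simp; omega),
            List.getElem?_eq_none (by simp; omega)]
        · rw [Function.iterate_zero_apply, hp]
          rfl
        · rw [hbd, hq]
          rfl
        · exact lt_of_le_of_ne hple hpne
      · -- |u| ≥ 2, use the IH on (vstar u, v)
        have hIH := (ih ((vstar u).length + v.length)
          (by rw [length_vstar]; omega) (vstar u) v hu1 hv rfl).1
        rcases hIH with hA | hB
        · -- child on-path: the crux
          have hsucc : ∀ k : ℕ, vstar^[k + 1] (u ++ v) = vstar^[k] (vstar u ++ v) := by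
            intro k; rw [Function.iterate_succ_apply, hw1]
          have hbig : vstar^[v.length + 1] (u ++ v) = vstar u := by
            rw [hsucc, hA]
          have hbv : vstar (vstar^[v.length] (u ++ v)) = vstar u := by
            rw [← Function.iterate_succ_apply' vstar v.length (u ++ v), hbig]
          have hblen : (vstar^[v.length] (u ++ v)).length = u.length := by
            rw [length_vstar_iter, hwlen]; omega
          refine ⟨hclause1, hclause2, 0, v.length, ?_, ?_, ?_⟩
          · simpa using hbig.symm
          · intro s' t' hpair
            refine ⟨Nat.zero_le _, ?_⟩
            by_contra ht'
            have := congrArg List.length hpair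
            rw [length_vstar_iter, length_vstar_iter, hwlen] at this
            omega
          · -- the j-data, via crux_core
            have hcore := crux_core (u := u) (b := vstar^[v.length] (u ++ v)) hu
              (i' := vdel (vstar^[v.length] (u ++ v)))
              (by rw [← hd]; exact vdel_iter_le _ _)
              ((vstar_eq_eraseIdx _).symm.trans hbv)
              ?htie
            · obtain ⟨j, hj, hhigh, p, q, hpj, hqj, hpq⟩ := hcore
              exact ⟨j, by simpa using hj, by simpa using hhigh, p, q,
                by simpa using hpj, hqj, hpq⟩
            case htie =>
              intro hii
              have hconst : ∀ k, k ≤ v.length →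
                  vdel (vstar^[k] (u ++ v)) = vdel u := by
                intro k hk
                have h1 : vdel (vstar^[k] (u ++ v)) ≤ vdel (u ++ v) :=
                  vdel_iter_le _ _
                have h2 : vdel (vstar^[v.length] (u ++ v)) ≤
                    vdel (vstar^[k] (u ++ v)) := vdel_iter_anti _ hk
                rw [hii] at h2
                rw [hd] at h1
                omega
              have hshift : ∀ k, k ≤ v.length → ∀ j, vdel u ≤ j →
                  (vstar^[k] (u ++ v))[j]? = (u ++ v)[j + k]? := by
                intro k
                induction k with
                | zero => intro _ j _; simp
                | succ k ihk =>
                  intro hk j hij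
                  rw [Function.iterate_succ_apply', vstar_eq_eraseIdx,
                    hconst k (by omega), List.getElem?_eraseIdx, if_neg (by omega),
                    ihk (by omega) (j + 1) (by omega)]
                  congr 1
                  omega
              have hq0 : (vstar^[v.length] (u ++ v))[vdel u]? =
                  (u ++ v)[vdel u + v.length]? :=
                hshift v.length le_rfl (vdel u) le_rfl
              have hqi : vdel u + v.length < (u ++ v).length := by
                rw [hwlen]; omega
              have hpi : (u ++ v)[vdel u]? = u[vdel u]? := by
                rw [List.getElem?_append, if_pos hdlt]
              have hchain : List.IsChain (· ≤ ·) ((u ++ v).drop (vdel u)) := by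
                have := chain'_drop_vdel (u ++ v)
                rwa [hd] at this
              have hlen_drop : v.length < ((u ++ v).drop (vdel u)).length := by
                simp only [List.length_drop, hwlen]; omega
              have hcmp := chain'_le_getElem hchain (Nat.zero_le v.length) hlen_drop
              rw [List.getElem_drop, List.getElem_drop] at hcmp
              simp only [Nat.add_zero] at hcmp
              have hP : (u ++ v)[vdel u]? = some ((u ++ v)[vdel u]'(by omega)) :=
                List.getElem?_eq_getElem _
              have hQ : (u ++ v)[vdel u + v.length]? =
                  some ((u ++ v)[vdel u + v.length]'hqi) :=
                List.getElem?_eq_getElem _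
              have hpne : (u ++ v)[vdel u]'(by omega) ≠
                  (u ++ v)[vdel u + v.length]'hqi := by
                intro he
                apply hb
                refine (eq_of_eraseIdx_eq (n := vdel u) ?_ ?_ hdlt).symm
                · rw [← vstar_eq_eraseIdx u, ← hii, ← vstar_eq_eraseIdx, hbv]
                · rw [hq0, ← hpi, hP, hQ, he]
              refine ⟨(u ++ v)[vdel u]'(by omega),
                (u ++ v)[vdel u + v.length]'hqi, ?_, ?_, lt_of_le_of_ne hcmp hpne⟩
              · rw [← hpi, hP]
              · rw [hq0, hQ]
        · exact vdata_step_xy hu (fun h => hv (List.append_eq_nil_iff.mp h).2) rfl hw1 (by rw [hwlen]; omega) hB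
    · -- first deletion inside v
      by_cases hv1 : vstar v = []
      · left
        have hvlen : v.length = 1 := by
          have := length_vstar v
          rw [hv1] at this
          simp at this
          omega
        rw [hvlen, Function.iterate_one, hw1, hv1, List.append_nil]
      · have hIH := (ih (u.length + (vstar v).length)
          (by rw [length_vstar]; omega) u (vstar v) hu hv1 rfl).1
        rcases hIH with hA | hB
        · left
          obtain ⟨L, hL⟩ : ∃ L, v.length = L + 1 := ⟨v.length - 1, by omega⟩
          have hL' : (vstar v).length = L := by rw [length_vstar]; omega
          rw [hL, Function.iterate_succ_apply, hw1, ← hL']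
          exact hA
        · right
          refine vdata_step_y hu hw1 (by rw [hwlen]; omega) ?_ hB
          simp
  · ----------------------------------------------------------------
    -- SUFFIX:  u  vs  v ++ u
    ----------------------------------------------------------------
    have hwlen : (v ++ u).length = v.length + u.length := by simp
    rcases vstar_append v u hv with ⟨hd, hdlt, hw1⟩ | ⟨hd, -, hw1⟩
    · -- first deletion inside v
      by_cases hv1 : vstar v = []
      · left
        have hvlen : v.length = 1 := by
          have := length_vstar v
          rw [hv1] at this
          simp at this
          omega
        constructor
        · rw [hvlen, Function.iterate_one, hw1, hv1, List.nil_append]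
        · intro k hk
          rw [hvlen] at hk
          rcases Nat.le_one_iff_eq_zero_or_eq_one.mp hk with rfl | rfl
          · simp
          · simp only [Function.iterate_one]
            rw [hw1, hv1, List.nil_append]
      · have hIH := (ih (u.length + (vstar v).length)
          (by rw [length_vstar]; omega) u (vstar v) hu hv1 rfl).2
        rcases hIH with ⟨hA, hclean⟩ | hB
        · left
          obtain ⟨L, hL⟩ : ∃ L, v.length = L + 1 := ⟨v.length - 1, by omega⟩
          have hL' : (vstar v).length = L := by rw [length_vstar]; omega
          constructor
          · rw [hL, Function.iterate_succ_apply, hw1, ← hL']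
            exact hA
          · intro k hk
            rcases Nat.eq_zero_or_pos k with rfl | hk0
            · simp
            · obtain ⟨K, hK⟩ : ∃ K, k = K + 1 := ⟨k - 1, by omega⟩
              rw [hK, Function.iterate_succ_apply, Function.iterate_succ_apply,
                hw1]
              exact hclean K (by rw [hL']; omega)
        · right
          refine vdata_step_y hu hw1 (by rw [hwlen]; omega) ?_ hB
          simp
    · -- first deletion inside u
      obtain ⟨g, hg⟩ := Option.isSome_iff_exists.mp
        (List.getLast?_isSome.mpr hv)
      have hglast : ∀ a ∈ u.head?, List.IsChain (· ≤ ·) u → a < g := by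
        intro a ha hcu
        exact boundary_of_udel hv hu hd hcu g hg a ha
      obtain ⟨L, hL⟩ : ∃ L, v.length = L + 1 := ⟨v.length - 1, by omega⟩
      by_cases hu1 : vstar u = []
      · -- |u| = 1 base case
        right
        have hulen : u.length = 1 := by
          have := length_vstar u
          rw [hu1] at this
          simp at this
          omega
        obtain ⟨p, hp⟩ := List.length_eq_one_iff.mp hulen
        have hb1 : vstar^[v.length] (v ++ u) = vstar^[L] v := by
          rw [hL, Function.iterate_succ_apply, hw1, hu1, List.append_nil]
        have hflen : (vstar^[L] v).length = 1 := by
          rw [length_vstar_iter]; omega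
        obtain ⟨m, hm⟩ := List.length_eq_one_iff.mp hflen
        have hgm : g ≤ m := by
          have h5 := last_le_vstar_iter (z := v) L (by rw [hm]; simp)
          refine h5 g hg m ?_
          rw [hm]
          rfl
        have hpg : p < g := by
          refine hglast p ?_ ?_
          · rw [hp]; rfl
          · rw [hp]; exact List.isChain_singleton p
        have hpm : p < m := lt_of_lt_of_le hpg hgm
        have hbne : vstar^[v.length] (v ++ u) ≠ u := by
          rw [hb1, hm, hp]
          intro he
          have : m = p := by simpa using he
          rw [this] at hpm
          exact lt_irrefl _ hpm
        refine ⟨?_, ?_, 0, v.length, ?_, ?_, 0, ?_, ?_, p, m, ?_, ?_, hpm⟩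
        · rintro ⟨k, hk⟩
          have := congrArg List.length hk
          rw [length_vstar_iter, hwlen] at this
          have hkv : k = v.length := by omega
          exact hbne (hkv ▸ hk)
        · rintro ⟨k, hk⟩
          have := congrArg List.length hk
          rw [length_vstar_iter, hwlen] at this
          omega
        · rw [show (0:ℕ) + 1 = 1 from rfl, Function.iterate_one, hu1]
          exact (vstar_iter_eq_nil_of_le (by rw [hwlen]; omega)).symm
        · intro s' t' hpair
          refine ⟨Nat.zero_le _, ?_⟩
          have := congrArg List.length hpair
          rw [length_vstar_iter, length_vstar_iter, hwlen] at this
          omega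
        · simp only [Function.iterate_zero_apply]; omega
        · intro j' hj'
          rw [Function.iterate_zero_apply, hb1, hm, hp]
          rw [List.getElem?_eq_none (by simp; omega),
            List.getElem?_eq_none (by simp; omega)]
        · rw [Function.iterate_zero_apply, hp]; rfl
        · rw [hb1, hm]; rfl
      · -- |u| ≥ 2, use the IH on (vstar u, v), suffix side
        have hIH := (ih ((vstar u).length + v.length)
          (by rw [length_vstar]; omega) (vstar u) v hu1 hv rfl).2
        rcases hIH with ⟨hA, hclean⟩ | hB
        · -- child on-path & clean: the suffix crux
          right
          have hflen : (vstar^[L] v).length = 1 := by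
            rw [length_vstar_iter]; omega
          obtain ⟨m, hm⟩ := List.length_eq_one_iff.mp hflen
          have hgm : g ≤ m := by
            have h5 := last_le_vstar_iter (z := v) L (by rw [hm]; simp)
            refine h5 g hg m ?_
            rw [hm]
            rfl
          have hb1 : vstar^[v.length] (v ++ u) = m :: vstar u := by
            rw [hL, Function.iterate_succ_apply, hw1,
              hclean L (by omega), hm]
            rfl
          have hbig : vstar^[v.length + 1] (v ++ u) = vstar u := by
            rw [Function.iterate_succ_apply, hw1, hclean v.length le_rfl,
              vstar_iter_eq_nil_of_le le_rfl, List.nil_append]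
          have hbv : vstar (vstar^[v.length] (v ++ u)) = vstar u := by
            rw [← Function.iterate_succ_apply' vstar v.length (v ++ u), hbig]
          have hbne : vstar^[v.length] (v ++ u) ≠ u := by
            rw [hb1]
            intro he
            have htail : vstar u = u.tail := by
              conv_rhs => rw [← he, List.tail_cons]
            have hcu : List.IsChain (· ≤ ·) u := chain'_of_vstar_eq_tail htail
            have hhead : u.head? = some m := by rw [← he]; rfl
            have h6 := hglast m hhead hcu
            exact (not_lt.mpr hgm) h6
          refine ⟨?_, ?_, 0, v.length, ?_, ?_, ?_⟩
          · rintro ⟨k, hk⟩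
            have := congrArg List.length hk
            rw [length_vstar_iter, hwlen] at this
            have hkv : k = v.length := by omega
            exact hbne (hkv ▸ hk)
          · rintro ⟨k, hk⟩
            have := congrArg List.length hk
            rw [length_vstar_iter, hwlen] at this
            omega
          · simpa using hbig.symm
          · intro s' t' hpair
            refine ⟨Nat.zero_le _, ?_⟩
            by_contra ht'
            have h1 : vstar^[t' + 1] (v ++ u) = vstar^[t'] v ++ vstar u := by
              rw [Function.iterate_succ_apply, hw1]
              exact hclean t' (by omega)
            rw [h1] at hpair
            have := congrArg List.length hpair
            rw [length_vstar_iter, List.length_append, length_vstar_iter,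
              length_vstar] at this
            omega
          · -- j-data via crux_core with i' = 0
            have hcore := crux_core (u := u) (b := vstar^[v.length] (v ++ u)) hu
              (i' := 0) (Nat.zero_le _)
              (by rw [hb1]; simp)
              ?htie
            · obtain ⟨j, hj, hhigh, p, q, hpj, hqj, hpq⟩ := hcore
              exact ⟨j, by simpa using hj, by simpa using hhigh, p, q,
                by simpa using hpj, hqj, hpq⟩
            case htie =>
              intro hii
              have hcu : List.IsChain (· ≤ ·) u := by
                have := chain'_drop_vdel u
                rwa [← hii, List.drop_zero] at this
              obtain ⟨a, ha⟩ := Option.isSome_iff_exists.mp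
                (List.isSome_head?.mpr hu)
              have hag : a < g := hglast a ha hcu
              refine ⟨a, m, ?_, ?_, lt_of_lt_of_le hag hgm⟩
              · rw [← hii, ← List.head?_eq_getElem?]
                exact ha
              · rw [← hii, hb1]
                simp
        · right
          exact vdata_step_xy hu (fun h => hu (List.append_eq_nil_iff.mp h).2) rfl hw1 (by rw [hwlen]; omega) hB

/-- Every nonempty proper prefix and every nonempty proper suffix of a string
precedes that string in V-order: for nonempty `u`, `v`, both `u ≺ uv`
and `u ≺ vu`. -/
theorem vless_prefix_and_suffix {α : Type*} [LinearOrder α]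
    (u v : List α) (hu : u ≠ []) (hv : v ≠ []) :
    VLess u (u ++ v) ∧ VLess u (v ++ u) := by
  obtain ⟨h1, h2⟩ := main_induction (u.length + v.length) u v hu hv rfl
  have hk : 0 < v.length := List.length_pos_iff.mpr hv
  constructor
  · rcases h1 with hA | hB
    · exact Or.inl ⟨v.length, hk, hA⟩
    · exact Or.inr hB
  · rcases h2 with ⟨hA, -⟩ | hB
    · exact Or.inl ⟨v.length, hk, hA⟩
    · exact Or.inr hB
end

section
/- Every nonempty word w over a linearly ordered alphabet can be written uniquely as a product w = u₁u₂⋯u_k of Lyndon words satisfying u₁ ≥ u₂ ≥ ⋯ ≥ u_k in lexicographic order (the Chen–Fox–Lyndon factorization). -/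
/-- A Lyndon word: a nonempty word that is strictly smaller, in lexicographic
order, than each of its proper nonempty suffixes (equivalently, a nonempty
primitive word strictly smaller than every other cyclic rotation of itself). -/
def IsLyndon {α : Type*} [LinearOrder α] (w : List α) : Prop :=
  w ≠ [] ∧ ∀ s : List α, s <:+ w → s ≠ [] → s ≠ w → List.Lex (· < ·) w s

namespace CFL

open List

variable {α : Type*} [LinearOrder α]

local notation a " ≺ " b => List.Lex (· < ·) a b

lemma lex_trans {a b c : List α} (h1 : a ≺ b) (h2 : b ≺ c) : a ≺ c :=
  List.lex_trans (fun h h' => _root_.lt_trans h h') h1 h2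

lemma lex_irrefl (a : List α) : ¬ (a ≺ a) := _root_.irrefl_of (List.Lex (· < ·)) a

lemma lex_asymm {a b : List α} (h : a ≺ b) : ¬ (b ≺ a) :=
  fun h' => lex_irrefl a (lex_trans h h')

/-- A list is Lex-smaller than any proper extension of itself. -/
lemma lex_append_nonempty : ∀ (p t : List α), t ≠ [] → p ≺ (p ++ t)
  | [], [], ht => absurd rfl ht
  | [], _ :: _, _ => List.Lex.nil
  | a :: p, t, ht => List.Lex.cons (lex_append_nonempty p t ht)

lemma lex_of_prefix {p q : List α} (h : p <+: q) (hne : p ≠ q) : p ≺ q := by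
  obtain ⟨t, rfl⟩ := h
  rcases eq_or_ne t [] with rfl | ht
  · simp at hne
  · exact lex_append_nonempty p t ht

lemma lex_append_of_not_prefix :
    ∀ {a b : List α}, (a ≺ b) → ¬ a <+: b → ∀ u v, (a ++ u) ≺ (b ++ v)
  | _, _, List.Lex.nil, hnp, _, _ => absurd (List.nil_prefix) hnp
  | _, _, List.Lex.cons h, hnp, u, v =>
      List.Lex.cons (lex_append_of_not_prefix h
        (fun hp => hnp (List.cons_prefix_cons.2 ⟨rfl, hp⟩)) u v)
  | _, _, List.Lex.rel h, _, _, _ => List.Lex.rel h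

lemma suffix_append_cases :
    ∀ {a : List α} {b s : List α}, s <:+ a ++ b →
      s <:+ b ∨ ∃ s', s' <:+ a ∧ s = s' ++ b
  | [], b, s, h => Or.inl h
  | x :: a, b, s, h => by
    rcases List.suffix_cons_iff.1 h with rfl | h'
    · exact Or.inr ⟨x :: a, suffix_refl _, rfl⟩
    · rcases suffix_append_cases h' with h'' | ⟨s', hs', rfl⟩
      · exact Or.inl h''
      · exact Or.inr ⟨s', hs'.trans (List.suffix_cons x a), rfl⟩

lemma isLyndon_singleton (a : α) : IsLyndon [a] := by
  refine ⟨cons_ne_nil _ _, fun s hs hne hnes => ?_⟩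
  rcases List.suffix_cons_iff.1 hs with rfl | hs'
  · exact absurd rfl hnes
  · rw [List.suffix_nil] at hs'
    exact absurd hs' hne

lemma lyndon_append_lex {a b : List α} (ha : IsLyndon a) (hb : IsLyndon b)
    (hab : a ≺ b) : (a ++ b) ≺ b := by
  by_cases hp : a <+: b
  · obtain ⟨c, rfl⟩ := hp
    have hc : c ≠ [] := by
      rintro rfl
      exact lex_irrefl a (by simpa using hab)
    have hca : c ≠ a ++ c := by
      intro h
      have := congrArg List.length h
      simp at this
      exact ha.1 this
    have hbc : (a ++ c) ≺ c := hb.2 c ⟨a, rfl⟩ hc hca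
    exact List.Lex.append_left _ hbc a
  · simpa using lex_append_of_not_prefix hab hp b []

lemma IsLyndon.append {a b : List α} (ha : IsLyndon a) (hb : IsLyndon b)
    (hab : a ≺ b) : IsLyndon (a ++ b) := by
  have hab_lt : (a ++ b) ≺ b := lyndon_append_lex ha hb hab
  refine ⟨by simp [ha.1], fun s hs hne hnes => ?_⟩
  have hsb : ∀ s : List α, s <:+ b → s ≠ [] → (a ++ b) ≺ s := by
    intro s hs hne
    rcases eq_or_ne s b with rfl | hsb'
    · exact hab_lt
    · exact lex_trans hab_lt (hb.2 s hs hne hsb')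
  rcases suffix_append_cases hs with h | ⟨s', hs', rfl⟩
  · exact hsb s h hne
  · rcases eq_or_ne s' [] with rfl | hs'ne
    · exact hsb b (suffix_refl b) (by simpa using hne)
    · have hs'a : s' ≠ a := by rintro rfl; exact hnes rfl
      have hlex : a ≺ s' := ha.2 s' hs' hs'ne hs'a
      have hlen : s'.length < a.length :=
        lt_of_le_of_ne hs'.length_le (fun h => hs'a (hs'.eq_of_length h))
      have hnp : ¬ a <+: s' := fun h => absurd h.length_le (not_le.2 hlen)
      exact lex_append_of_not_prefix hlex hnp b b

/-- the validity predicate for a factorization -/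
def Fact (w : List α) (fs : List (List α)) : Prop :=
  fs.flatten = w ∧ (∀ f ∈ fs, IsLyndon f) ∧
    fs.Chain' (fun a b => ¬ List.Lex (· < ·) a b)

lemma lex_tri (a b : List α) : (a ≺ b) ∨ a = b ∨ (b ≺ a) := by
  haveI : IsTrichotomous α (· < ·) := ⟨fun a b h1 h2 => le_antisymm (not_lt.1 h2) (not_lt.1 h1)⟩
  exact _root_.trichotomous_of (List.Lex (· < ·)) a b

instance : IsTrans (List α) (fun a b => ¬ List.Lex (· < ·) a b) := by
  constructor
  intro a b c hab hbc h
  rcases lex_tri b c with h1 | rfl | h1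
  · exact hbc h1
  · exact hab h
  · exact hab (lex_trans h h1)

/-- Key lemma: any nonempty prefix of the flatten of a family of words all `≤ b`
has a nonempty suffix `≤ b`. -/
lemma exists_suffix_of_prefix_flatten {b : List α} :
    ∀ {gs : List (List α)}, (∀ g ∈ gs, g ≠ [] ∧ ¬ (b ≺ g)) →
    ∀ {p : List α}, p ≠ [] → p <+: gs.flatten →
    ∃ s, s <:+ p ∧ s ≠ [] ∧ ¬ (b ≺ s)
  | [], _, p, hp, hpre => absurd (List.prefix_nil.1 hpre) hp
  | g :: gs, hg, p, hp, hpre => by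
    have hgw : g <+: (g :: gs).flatten := by
      simp only [List.flatten_cons]; exact ⟨gs.flatten, rfl⟩
    by_cases hlen : p.length ≤ g.length
    · have hpg : p <+: g := List.prefix_of_prefix_length_le hpre hgw hlen
      refine ⟨p, suffix_refl p, hp, fun hbp => (hg g (mem_cons_self)).2 ?_⟩
      rcases eq_or_ne p g with h | h
      · exact h ▸ hbp
      · exact lex_trans hbp (lex_of_prefix hpg h)
    · push_neg at hlen
      have hgp : g <+: p := List.prefix_of_prefix_length_le hgw hpre hlen.le
      obtain ⟨p', rfl⟩ := hgp
      have hp' : p' ≠ [] := by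
        rintro rfl; simp at hlen
      have hpre' : p' <+: gs.flatten := by
        rw [List.flatten_cons] at hpre
        exact (List.prefix_append_right_inj g).1 hpre
      obtain ⟨s, hs1, hs2, hs3⟩ :=
        exists_suffix_of_prefix_flatten (fun x hx => hg x (mem_cons_of_mem _ hx)) hp' hpre'
      exact ⟨s, hs1.trans ⟨g, rfl⟩, hs2, hs3⟩

/-- In a valid factorization `u :: us` of `w`, any Lyndon prefix of `w` has
length at most `|u|`. -/
lemma length_le_of_lyndon_prefix {w : List α} {u : List α} {us : List (List α)}
    (hf : Fact w (u :: us)) {p : List α} (hp : IsLyndon p) (hpre : p <+: w) :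
    p.length ≤ u.length := by
  by_contra hlen
  push_neg at hlen
  obtain ⟨hflat, hlyn, hchain⟩ := hf
  have hbound : ∀ g ∈ u :: us, g ≠ [] ∧ ¬ (u ≺ g) := by
    intro g hgmem
    refine ⟨(hlyn g hgmem).1, ?_⟩
    rcases List.mem_cons.1 hgmem with rfl | hgmem'
    · exact lex_irrefl g
    · exact List.rel_of_pairwise_cons (List.isChain_iff_pairwise.1 hchain) hgmem'
  have hpre' : p <+: (u :: us).flatten := by rw [hflat]; exact hpre
  obtain ⟨s, hs1, hs2, hs3⟩ :=
    exists_suffix_of_prefix_flatten hbound hp.1 hpre'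
  have huw : u <+: w := by
    rw [← hflat, List.flatten_cons]; exact ⟨us.flatten, rfl⟩
  have hup : u <+: p := List.prefix_of_prefix_length_le huw hpre hlen.le
  have hune : u ≠ p := fun h => by rw [h] at hlen; exact lt_irrefl _ hlen
  have hulex : u ≺ p := lex_of_prefix hup hune
  rcases eq_or_ne s p with rfl | hsp
  · exact hs3 hulex
  · exact hs3 (lex_trans hulex (hp.2 s hs1 hs2 hsp))

lemma fact_head_eq {w : List α} {u v : List α} {us vs : List (List α)}
    (hf : Fact w (u :: us)) (hg : Fact w (v :: vs)) : u = v := by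
  have huw : u <+: w := by
    rw [← hf.1, List.flatten_cons]; exact ⟨us.flatten, rfl⟩
  have hvw : v <+: w := by
    rw [← hg.1, List.flatten_cons]; exact ⟨vs.flatten, rfl⟩
  have h1 : u.length ≤ v.length :=
    length_le_of_lyndon_prefix hg (hf.2.1 u (mem_cons_self)) huw
  have h2 : v.length ≤ u.length :=
    length_le_of_lyndon_prefix hf (hg.2.1 v (mem_cons_self)) hvw
  exact (List.prefix_of_prefix_length_le huw hvw h1).eq_of_length (le_antisymm h1 h2)

lemma fact_unique : ∀ (n : ℕ) (w : List α), w.length ≤ n →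
    ∀ fs gs, Fact w fs → Fact w gs → fs = gs := by
  intro n
  induction n with
  | zero =>
    intro w hw fs gs hf hg
    have hwnil : w = [] := List.length_eq_zero_iff.1 (Nat.le_zero.1 hw)
    subst hwnil
    have h1 : fs = [] := by
      cases fs with
      | nil => rfl
      | cons f fs' =>
        exact absurd ((hf.2.1 f (mem_cons_self)).1)
          (not_not.2 (List.flatten_eq_nil_iff.1 hf.1 f (mem_cons_self)))
    have h2 : gs = [] := by
      cases gs with
      | nil => rfl
      | cons g gs' =>
        exact absurd ((hg.2.1 g (mem_cons_self)).1)
          (not_not.2 (List.flatten_eq_nil_iff.1 hg.1 g (mem_cons_self)))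
    rw [h1, h2]
  | succ n ih =>
    intro w hw fs gs hf hg
    rcases eq_or_ne w [] with rfl | hwne
    · exact ih [] (Nat.zero_le n) fs gs hf hg
    cases fs with
    | nil => exact absurd hf.1.symm hwne
    | cons u us =>
      cases gs with
      | nil => exact absurd hg.1.symm hwne
      | cons v vs =>
        have huv : u = v := fact_head_eq hf hg
        subst huv
        have hu_ne : u ≠ [] := (hf.2.1 u (mem_cons_self)).1
        have hflat : us.flatten = vs.flatten := by
          have h1 : u ++ us.flatten = u ++ vs.flatten := by
            rw [← List.flatten_cons, ← List.flatten_cons, hf.1, hg.1]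
          exact List.append_cancel_left h1
        have hlen : us.flatten.length ≤ n := by
          have h1 : u.length + us.flatten.length = w.length := by
            rw [← hf.1]; simp
          have h2 : 1 ≤ u.length := List.length_pos_iff.2 hu_ne
          omega
        have htail : us = vs := by
          refine ih us.flatten hlen us vs
            ⟨rfl, fun f hf' => hf.2.1 f (mem_cons_of_mem _ hf'), hf.2.2.tail⟩
            ⟨hflat.symm, fun f hf' => hg.2.1 f (mem_cons_of_mem _ hf'), hg.2.2.tail⟩
        rw [htail]

open Classical in
lemma fact_exists : ∀ (n : ℕ) (w : List α), w.length ≤ n → w ≠ [] →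
    ∃ fs, Fact w fs := by
  intro n
  induction n with
  | zero =>
    intro w hw hwne
    exact absurd (List.length_eq_zero_iff.1 (Nat.le_zero.1 hw)) hwne
  | succ n ih =>
    intro w hw hwne
    set P : ℕ → Prop := fun k => IsLyndon (w.take k) with hP
    have hw1 : 1 ≤ w.length := List.length_pos_iff.2 hwne
    have hP1 : P 1 := by
      obtain ⟨a, w', rfl⟩ := List.exists_cons_of_ne_nil hwne
      simpa [hP] using isLyndon_singleton a
    set m := Nat.findGreatest P w.length with hm
    have hm1 : 1 ≤ m := Nat.le_findGreatest hw1 hP1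
    have hmw : m ≤ w.length := Nat.findGreatest_le _
    have hPm : P m := Nat.findGreatest_spec hw1 hP1
    set p := w.take m with hp
    set w' := w.drop m with hw'
    have hsplit : p ++ w' = w := List.take_append_drop m w
    have hplen : p.length = m := by
      rw [hp, List.length_take]; omega
    rcases eq_or_ne w' [] with hw'nil | hw'ne
    · refine ⟨[p], ?_, ?_, List.isChain_singleton p⟩
      · simp only [List.flatten, List.append_nil, List.append_eq]
        rw [← hsplit, hw'nil, List.append_nil]
      · intro f hfmem
        rw [List.mem_singleton] at hfmem
        rw [hfmem]; exact hPm
    · have hw'len : w'.length ≤ n := by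
        rw [hw', List.length_drop]; omega
      obtain ⟨fs', hfs'⟩ := ih w' hw'len hw'ne
      cases fs' with
      | nil => exact absurd hfs'.1.symm hw'ne
      | cons q qs =>
        refine ⟨p :: q :: qs, ?_, ?_, ?_⟩
        · rw [List.flatten_cons, hfs'.1, hsplit]
        · intro f hfmem
          rcases List.mem_cons.1 hfmem with rfl | h'
          · exact hPm
          · exact hfs'.2.1 f h'
        · show List.IsChain _ (p :: q :: qs); rw [List.isChain_cons]
          refine ⟨?_, hfs'.2.2⟩
          intro y hy hlex
          simp only [List.head?_cons, Option.mem_def, Option.some.injEq] at hy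
          subst hy
          have hq : IsLyndon q := hfs'.2.1 q (mem_cons_self)
          have hpq : IsLyndon (p ++ q) := IsLyndon.append hPm hq hlex
          have hqw' : q <+: w' := by
            rw [← hfs'.1, List.flatten_cons]; exact ⟨qs.flatten, rfl⟩
          have hpqw : p ++ q <+: w := by
            rw [← hsplit]; exact (List.prefix_append_right_inj p).2 hqw'
          have hqlen : 1 ≤ q.length := List.length_pos_iff.2 hq.1
          have hle : m + q.length ≤ w.length := by
            have := hpqw.length_le
            rwa [List.length_append, hplen] at this
          have hPk : P (m + q.length) := by
            have heq : p ++ q = w.take ((p ++ q).length) :=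
              List.prefix_iff_eq_take.1 hpqw
            rw [List.length_append, hplen] at heq
            show IsLyndon (w.take (m + q.length))
            rw [← heq]; exact hpq
          exact Nat.findGreatest_is_greatest (by rw [← hm]; omega) hle hPk

end CFL

/-- Chen–Fox–Lyndon theorem: every nonempty word `w` over a linearly ordered
alphabet can be written uniquely as a product `w = u₁u₂⋯u_k` of Lyndon words
with `u₁ ≥ u₂ ≥ ⋯ ≥ u_k` in lexicographic order. -/
theorem chen_fox_lyndon_factorization {α : Type*} [LinearOrder α]
    (w : List α) (hw : w ≠ []) :
    ∃! fs : List (List α),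
      fs.flatten = w ∧
      (∀ f ∈ fs, IsLyndon f) ∧
      fs.Chain' (fun a b => ¬ List.Lex (· < ·) a b) := by
  obtain ⟨fs, hfs⟩ := CFL.fact_exists w.length w le_rfl hw
  exact ⟨fs, hfs, fun gs hgs => CFL.fact_unique w.length w le_rfl gs fs hgs hfs⟩
end
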